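/- Let X be a countable collection of languages and K ∈ X. The following are equivalent: (a) for every index-based generation algorithm f that guarantees validity for X, there exists an enumeration E of K such that liminf_{t→∞} μ_up(L_{i_t}, K) = 0, where i_t = f(w_1, …, w_t); (b) for every ε > 0 there exists an infinite perfect tower of languages from X with terminal language K in which every language Λ_j satisfies μ_up(Λ_j, K) ≤ ε. -/

import Mathlib

/-- The finite prefix `[E 0, …, E t]` of the adversary's enumeration. -/
def epref (E : ℕ → ℕ) (t : ℕ) : List ℕ := (List.range (t + 1)).map E

/-- `E` is an enumeration of the language `K`. -/
def IsEnum (E : ℕ → ℕ) (K : Set ℕ) : Prop := Function.Injective E ∧ Set.range E = K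

/-- The upper density of `L` in the infinite set `K`:
`limsup_{N→∞} |L ∩ {k_1,…,k_N}| / N`, where `k_1 < k_2 < ⋯` lists `K` in
increasing order (`Nat.nth (· ∈ K)` gives this listing, 0-indexed). -/
noncomputable def upperDensity (L K : Set ℕ) : ℝ :=
  Filter.limsup
    (fun N : ℕ => ((Set.ncard {n : ℕ | n < N ∧ Nat.nth (· ∈ K) n ∈ L}) : ℝ) / N)
    Filter.atTop

/-- The sets `B_k` associated with a sequence of languages:
`B_0 = ⋂_i Λ i` and `B_k = (⋂_{i ≥ k} Λ i) \ (B_0 ∪ ⋯ ∪ B_{k-1})`. -/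
def towerB (Λ : ℕ → Set ℕ) : ℕ → Set ℕ
  | k => {w | ∀ i, k ≤ i → w ∈ Λ i} \ {w | ∃ m, ∃ _ : m < k, w ∈ towerB Λ m}

/-- `(Λ 0, Λ 1, …)` is an infinite perfect tower of (pairwise distinct, infinite)
languages with terminal language `K`. -/
structure IsPerfectTower (Λ : ℕ → Set ℕ) (K : Set ℕ) : Prop where
  injective : Function.Injective Λ
  infinite : ∀ j, (Λ j).Infinite
  proper : ∀ j, Λ j ⊂ K
  nonempty : ∀ j, (towerB Λ j).Nonempty
  complete : (⋃ j, towerB Λ j) = K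

/-- The index-based generation algorithm `f` guarantees validity for the collection
`L`: on any enumeration of any member of the collection, its guesses are eventually
always subsets of the enumerated language. -/
def GuaranteesValidity (L : ℕ → Set ℕ) (f : List ℕ → ℕ) : Prop :=
  ∀ (i : ℕ) (E : ℕ → ℕ), IsEnum E (L i) →
    ∃ t0 : ℕ, ∀ t ≥ t0, L (f (epref E t)) ⊆ L i


open Filter Set


lemma dseq_mem_Icc (L K : Set ℕ) (N : ℕ) :
    ((Set.ncard {n : ℕ | n < N ∧ Nat.nth (· ∈ K) n ∈ L}) : ℝ) / N ∈ Set.Icc (0:ℝ) 1 := by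
  constructor
  · positivity
  · rcases Nat.eq_zero_or_pos N with h | h
    · simp [h]
    · rw [div_le_one (by exact_mod_cast h)]
      have hsub : {n : ℕ | n < N ∧ Nat.nth (· ∈ K) n ∈ L} ⊆ ↑(Finset.range N) := by
        intro n hn; simpa using hn.1
      have h1 := Set.ncard_le_ncard hsub (Finset.range N).finite_toSet
      have h2 : (↑(Finset.range N) : Set ℕ).ncard = N := by
        rw [Set.ncard_coe_finset]; simp
      rw [h2] at h1
      exact_mod_cast h1

lemma dseq_bddAbove (L K : Set ℕ) :
    IsBoundedUnder (· ≤ ·) atTop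
      (fun N : ℕ => ((Set.ncard {n : ℕ | n < N ∧ Nat.nth (· ∈ K) n ∈ L}) : ℝ) / N) :=
  Filter.isBoundedUnder_of ⟨1, fun N => (dseq_mem_Icc L K N).2⟩

lemma dseq_bddBelow (L K : Set ℕ) :
    IsBoundedUnder (· ≥ ·) atTop
      (fun N : ℕ => ((Set.ncard {n : ℕ | n < N ∧ Nat.nth (· ∈ K) n ∈ L}) : ℝ) / N) :=
  Filter.isBoundedUnder_of ⟨0, fun N => (dseq_mem_Icc L K N).1⟩

lemma upperDensity_nonneg (L K : Set ℕ) : 0 ≤ upperDensity L K :=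
  Filter.le_limsup_of_frequently_le
    (Filter.Eventually.frequently (Filter.Eventually.of_forall fun N => (dseq_mem_Icc L K N).1))
    (dseq_bddAbove L K)

lemma upperDensity_le_one (L K : Set ℕ) : upperDensity L K ≤ 1 :=
  Filter.limsup_le_of_le ((dseq_bddBelow L K).isCoboundedUnder_le)
    (Filter.Eventually.of_forall fun N => (dseq_mem_Icc L K N).2)

lemma upperDensity_mono {L L' : Set ℕ} (K : Set ℕ) (h : L ⊆ L') :
    upperDensity L K ≤ upperDensity L' K := by
  refine Filter.limsup_le_limsup (Filter.Eventually.of_forall fun N => ?_)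
    ((dseq_bddBelow L K).isCoboundedUnder_le) (dseq_bddAbove L' K)
  have hsub : {n : ℕ | n < N ∧ Nat.nth (· ∈ K) n ∈ L} ⊆ {n : ℕ | n < N ∧ Nat.nth (· ∈ K) n ∈ L'} :=
    fun n hn => ⟨hn.1, h hn.2⟩
  have hfin : {n : ℕ | n < N ∧ Nat.nth (· ∈ K) n ∈ L'}.Finite :=
    (Finset.range N).finite_toSet.subset (fun n hn => by simpa using hn.1)
  have h1 := Set.ncard_le_ncard hsub hfin
  rcases Nat.eq_zero_or_pos N with h0 | h0
  · simp [h0]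
  · have hN : (0:ℝ) < N := by exact_mod_cast h0
    have : ((Set.ncard {n : ℕ | n < N ∧ Nat.nth (· ∈ K) n ∈ L}) : ℝ)
        ≤ (Set.ncard {n : ℕ | n < N ∧ Nat.nth (· ∈ K) n ∈ L'}) := by exact_mod_cast h1
    exact div_le_div_of_nonneg_right this hN.le |>.trans_eq rfl


lemma upperDensity_self {K : Set ℕ} (hK : K.Infinite) : upperDensity K K = 1 := by
  have : ∀ᶠ N : ℕ in atTop,
      ((Set.ncard {n : ℕ | n < N ∧ Nat.nth (· ∈ K) n ∈ K}) : ℝ) / N = 1 := by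
    filter_upwards [Filter.eventually_ge_atTop 1] with N hN
    have hset : {n : ℕ | n < N ∧ Nat.nth (· ∈ K) n ∈ K} = ↑(Finset.range N) := by
      ext n
      simp only [Set.mem_setOf_eq, Finset.coe_range, Set.mem_Iio]
      exact ⟨fun h => h.1, fun h => ⟨h, Nat.nth_mem_of_infinite hK n⟩⟩
    rw [hset, Set.ncard_coe_finset, Finset.card_range, div_self]
    exact_mod_cast Nat.one_le_iff_ne_zero.mp hN
  rw [upperDensity, Filter.limsup_congr this, Filter.limsup_const]


lemma towerB_def (Λ : ℕ → Set ℕ) (k : ℕ) :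
    towerB Λ k = {w | ∀ i, k ≤ i → w ∈ Λ i} \ {w | ∃ m, ∃ _ : m < k, w ∈ towerB Λ m} := by
  rw [towerB]

lemma towerB_subset (Λ : ℕ → Set ℕ) (k : ℕ) :
    towerB Λ k ⊆ {w | ∀ i, k ≤ i → w ∈ Λ i} := by
  rw [towerB_def]; exact Set.diff_subset

lemma exists_mem_towerB (Λ : ℕ → Set ℕ) {k : ℕ} {w : ℕ} (h : ∀ i, k ≤ i → w ∈ Λ i) :
    ∃ m, w ∈ towerB Λ m := by
  by_cases hc : ∃ m, ∃ _ : m < k, w ∈ towerB Λ m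
  · obtain ⟨m, _, hm⟩ := hc; exact ⟨m, hm⟩
  · exact ⟨k, by rw [towerB_def]; exact ⟨h, hc⟩⟩

lemma mem_towerB_of (Λ : ℕ → Set ℕ) {k : ℕ} {w : ℕ} (h : ∀ i, k ≤ i → w ∈ Λ i)
    (h2 : ∀ m, m < k → w ∉ towerB Λ m) : w ∈ towerB Λ k := by
  rw [towerB_def]
  exact ⟨h, by rintro ⟨m, hm, hmem⟩; exact h2 m hm hmem⟩

/-- The key finitary condition: every finite subset of `K = L z` is contained in some
proper sublanguage of `K` from the collection with upper density at most `ε`. -/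
def Cprop (L : ℕ → Set ℕ) (z : ℕ) (ε : ℝ) : Prop :=
  ∀ S : Finset ℕ, ↑S ⊆ L z →
    ∃ i, ↑S ⊆ L i ∧ L i ⊂ L z ∧ upperDensity (L i) (L z) ≤ ε

lemma tower_to_C {L : ℕ → Set ℕ} {z : ℕ} {ε : ℝ}
    (Λ : ℕ → Set ℕ) (hX : ∀ j, ∃ i, Λ j = L i) (hT : IsPerfectTower Λ (L z))
    (hd : ∀ j, upperDensity (Λ j) (L z) ≤ ε) : Cprop L z ε := by
  classical
  intro S hS
  have hmem : ∀ w ∈ S, ∃ c, ∀ j, c ≤ j → w ∈ Λ j := by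
    intro w hw
    have : w ∈ ⋃ j, towerB Λ j := hT.complete ▸ hS hw
    rcases Set.mem_iUnion.mp this with ⟨c, hc⟩
    exact ⟨c, fun j hj => towerB_subset Λ c hc j hj⟩
  choose g hg using hmem
  classical
  set J : ℕ := S.sup (fun w => if h : w ∈ S then g w h else 0) with hJ
  obtain ⟨i, hi⟩ := hX J
  refine ⟨i, ?_, hi ▸ hT.proper J, hi ▸ hd J⟩
  intro w hw
  have hw' : w ∈ S := hw
  have hle : g w hw' ≤ J := by
    have := Finset.le_sup (f := fun w => if h : w ∈ S then g w h else 0) hw'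
    simpa [hw'] using this
  exact hi ▸ hg w hw' J hle

lemma C_to_tower {L : ℕ → Set ℕ} (hinf : ∀ i, (L i).Infinite) {z : ℕ} {ε : ℝ}
    (hC : Cprop L z ε) :
    ∃ Λ : ℕ → Set ℕ, (∀ j, ∃ i, Λ j = L i) ∧ IsPerfectTower Λ (L z) ∧
      ∀ j, upperDensity (Λ j) (L z) ≤ ε := by
  classical
  have hKinf : (L z).Infinite := hinf z
  set k : ℕ → ℕ := fun n => Nat.nth (· ∈ L z) n with hkdef
  have hkmem : ∀ n, k n ∈ L z := fun n => Nat.nth_mem_of_infinite hKinf n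
  -- base sequence of languages
  have hbase : ∀ m : ℕ, ∃ i, (∀ n ≤ m, k n ∈ L i) ∧ L i ⊂ L z ∧
      upperDensity (L i) (L z) ≤ ε := by
    intro m
    obtain ⟨i, h1, h2, h3⟩ := hC ((Finset.range (m+1)).image k) (by
      intro x hx
      simp only [Finset.coe_image, Set.mem_image, Finset.mem_coe, Finset.mem_range] at hx
      rcases hx with ⟨n, _, rfl⟩; exact hkmem n)
    refine ⟨i, fun n hn => h1 ?_, h2, h3⟩
    simp only [Finset.coe_image, Set.mem_image, Finset.mem_coe, Finset.mem_range]
    exact ⟨n, Nat.lt_succ_of_le hn, rfl⟩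
  choose I hI1 hI2 hI3 using hbase
  -- covering function
  have hMex : ∀ w, w ∈ L z → ∃ c, ∀ m, c ≤ m → w ∈ L (I m) := by
    intro w hw
    obtain ⟨n, hn⟩ := Nat.subset_range_nth hw
    exact ⟨n, fun m hm => hn ▸ hI1 m n hm⟩
  choose M hM using hMex
  -- witnesses outside each language
  have hwit : ∀ i : ℕ, ∃ w, w ∈ L z ∧ w ∉ L (I i) := by
    intro i
    obtain ⟨x, hx1, hx2⟩ := Set.exists_of_ssubset (hI2 i)
    exact ⟨x, hx1, hx2⟩
  choose W hW1 hW2 using hwit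
  obtain ⟨a0, ha0⟩ := hKinf.nonempty
  -- greedy index sequence
  set j : ℕ → ℕ := fun t => Nat.rec (M a0 ha0) (fun t jt => max (jt + 1) (M (W jt) (hW1 jt))) t
    with hjdef
  have hj0 : j 0 = M a0 ha0 := rfl
  have hjs : ∀ t, j (t+1) = max (j t + 1) (M (W (j t)) (hW1 (j t))) := fun t => rfl
  have hjmono : StrictMono j := strictMono_nat_of_lt_succ (fun t => by
    rw [hjs t]; exact lt_of_lt_of_le (Nat.lt_succ_self _) (le_max_left _ _))
  set Λ : ℕ → Set ℕ := fun t => L (I (j t)) with hΛdef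
  have hΛtail : ∀ t s, t + 1 ≤ s → W (j t) ∈ Λ s := by
    intro t s hs
    have h1 : M (W (j t)) (hW1 (j t)) ≤ j (t+1) := by rw [hjs t]; exact le_max_right _ _
    have h2 : j (t+1) ≤ j s := hjmono.monotone hs
    exact hM _ (hW1 (j t)) _ (le_trans h1 h2)
  have hΛa0 : ∀ s, a0 ∈ Λ s := by
    intro s
    exact hM a0 ha0 _ (le_trans (le_of_eq hj0.symm) (hjmono.monotone (Nat.zero_le s)))
  refine ⟨Λ, fun t => ⟨I (j t), rfl⟩, ?_, fun t => hI3 (j t)⟩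
  have hproper : ∀ t, Λ t ⊂ L z := fun t => hI2 (j t)
  constructor
  · -- injective
    intro s t hst
    by_contra hne
    rcases Nat.lt_or_ge s t with h | h
    · have : W (j s) ∈ Λ s := hst ▸ hΛtail s t h
      exact hW2 (j s) this
    · have h' : t < s := lt_of_le_of_ne h (Ne.symm hne)
      have : W (j t) ∈ Λ t := hst.symm ▸ hΛtail t s h'
      exact hW2 (j t) this
  · exact fun t => hinf (I (j t))
  · exact hproper
  · -- nonempty towerB
    intro t
    cases t with
    | zero =>
      refine ⟨a0, mem_towerB_of Λ (fun i _ => hΛa0 i) (fun m hm => absurd hm (Nat.not_lt_zero m))⟩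
    | succ t =>
      refine ⟨W (j t), mem_towerB_of Λ (fun i hi => hΛtail t i hi) ?_⟩
      intro m hm hmem
      have : W (j t) ∈ Λ t := towerB_subset Λ m hmem t (Nat.lt_succ_iff.mp hm)
      exact hW2 (j t) this
  · -- complete
    apply Set.eq_of_subset_of_subset
    · intro w hw
      rcases Set.mem_iUnion.mp hw with ⟨c, hc⟩
      exact (hproper c).subset (towerB_subset Λ c hc c le_rfl)
    · intro w hw
      have htail : ∀ i, M w hw ≤ i → w ∈ Λ i := by
        intro i hi
        exact hM w hw _ (le_trans hi (hjmono.le_apply))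
      exact Set.mem_iUnion.mpr (exists_mem_towerB Λ htail)


lemma mem_epref_iff {E : ℕ → ℕ} {t : ℕ} {x : ℕ} :
    x ∈ epref E t ↔ ∃ n ≤ t, E n = x := by
  simp [epref, List.mem_map, List.mem_range, Nat.lt_succ_iff]

lemma epref_length (E : ℕ → ℕ) (t : ℕ) : (epref E t).length = t + 1 := by
  simp [epref]

/-- `j` is a consistent index for the sample `σ`. -/
def consIdx (L : ℕ → Set ℕ) (σ : List ℕ) (j : ℕ) : Prop := ∀ x ∈ σ, x ∈ L j

/-- `j` is a critical index for the sample `σ` (Kleinberg–Mullainathan). -/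
def critIdx (L : ℕ → Set ℕ) (σ : List ℕ) (j : ℕ) : Prop :=
  consIdx L σ j ∧ ∀ j' < j, consIdx L σ j' → L j ⊆ L j'

open Classical in
/-- The Kleinberg–Mullainathan generation algorithm. -/
noncomputable def km (L : ℕ → Set ℕ) (σ : List ℕ) : ℕ :=
  if h : ∃ j, consIdx L σ j then
    Nat.findGreatest (critIdx L σ) (max σ.length (Nat.find h))
  else 0

open Classical in
lemma km_eq (L : ℕ → Set ℕ) (σ : List ℕ) (h : ∃ j, consIdx L σ j) :
    km L σ = Nat.findGreatest (critIdx L σ) (max σ.length (Nat.find h)) := dif_pos h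

open Classical in
lemma km_crit (L : ℕ → Set ℕ) (σ : List ℕ) (h : ∃ j, consIdx L σ j) :
    critIdx L σ (km L σ) := by
  rw [km_eq L σ h]
  refine Nat.findGreatest_spec (m := Nat.find h) (le_max_right _ _) ?_
  refine ⟨Nat.find_spec h, fun j' hj' hc => absurd hc (Nat.find_min h hj')⟩

lemma km_cons (L : ℕ → Set ℕ) (σ : List ℕ) (h : ∃ j, consIdx L σ j) :
    consIdx L σ (km L σ) := (km_crit L σ h).1

open Classical in
lemma km_ge (L : ℕ → Set ℕ) (σ : List ℕ) (h : ∃ j, consIdx L σ j) {i : ℕ}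
    (hi : critIdx L σ i) (hib : i ≤ σ.length) : i ≤ km L σ := by
  rw [km_eq L σ h]
  exact Nat.le_findGreatest (le_trans hib (le_max_left _ _)) hi

lemma km_valid (L : ℕ → Set ℕ) : GuaranteesValidity L (km L) := by
  classical
  intro i E hE
  obtain ⟨hinj, hrange⟩ := hE
  have hEmem : ∀ n, E n ∈ L i := fun n => hrange ▸ Set.mem_range_self n
  have hconsi : ∀ t, consIdx L (epref E t) i := by
    intro t x hx
    rcases mem_epref_iff.mp hx with ⟨n, _, rfl⟩
    exact hEmem n
  have hbad : ∀ j, ¬ L i ⊆ L j → ∃ n, E n ∉ L j := by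
    intro j hj
    rcases Set.not_subset.mp hj with ⟨w, hw1, hw2⟩
    have : w ∈ Set.range E := hrange.symm ▸ hw1
    rcases this with ⟨n, rfl⟩
    exact ⟨n, hw2⟩
  have hW : ∃ W : ℕ → ℕ, ∀ j, ¬ L i ⊆ L j → E (W j) ∉ L j := by
    refine ⟨fun j => if h : ¬ L i ⊆ L j then (hbad j h).choose else 0, fun j h => ?_⟩
    simp only [h, dif_pos]
    exact (hbad j h).choose_spec
  obtain ⟨W, hWspec⟩ := hW
  set t1 := Finset.sup (Finset.range (i+1)) W with ht1
  refine ⟨max t1 i, fun t ht => ?_⟩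
  have hti : i ≤ t := le_trans (le_max_right _ _) ht
  have htt1 : t1 ≤ t := le_trans (le_max_left _ _) ht
  have hcons_sub : ∀ j ≤ i, consIdx L (epref E t) j → L i ⊆ L j := by
    intro j hj hcons
    by_contra hns
    have hn : W j ≤ t1 := Finset.le_sup (Finset.mem_range.mpr (Nat.lt_succ_of_le hj))
    exact hWspec j hns (hcons _ (mem_epref_iff.mpr ⟨W j, le_trans hn htt1, rfl⟩))
  have hcrit_i : critIdx L (epref E t) i :=
    ⟨hconsi t, fun j' hj' hc => hcons_sub j' (le_of_lt hj') hc⟩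
  have hex : ∃ j, consIdx L (epref E t) j := ⟨i, hconsi t⟩
  have hkm : critIdx L (epref E t) (km L (epref E t)) := km_crit L _ hex
  have hge : i ≤ km L (epref E t) := by
    refine km_ge L _ hex hcrit_i ?_
    rw [epref_length]
    exact le_trans hti (Nat.le_succ_of_le le_rfl)
  rcases eq_or_lt_of_le hge with heq | hlt
  · rw [← heq]
  · exact hkm.2 i hlt (hconsi t)


lemma km_fools {L : ℕ → Set ℕ} (hinf : ∀ i, (L i).Infinite) (z : ℕ) {ε : ℝ} (hε : 0 < ε)
    (hnC : ¬ Cprop L z ε) (E : ℕ → ℕ) (hE : IsEnum E (L z)) :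
    Filter.liminf (fun t : ℕ => upperDensity (L (km L (epref E t))) (L z)) Filter.atTop ≠ 0 := by
  classical
  obtain ⟨S0, hS0K, hS0⟩ : ∃ S : Finset ℕ, ↑S ⊆ L z ∧
      ∀ i, ↑S ⊆ L i → L i ⊂ L z → ε < upperDensity (L i) (L z) := by
    unfold Cprop at hnC
    push_neg at hnC
    obtain ⟨S, hS1, hS2⟩ := hnC
    exact ⟨S, hS1, hS2⟩
  obtain ⟨t0, ht0⟩ := km_valid L z E hE
  have hNex : ∀ s ∈ S0, ∃ n, E n = s := by
    intro s hs
    have : s ∈ Set.range E := hE.2.symm ▸ hS0K hs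
    exact this
  choose N hN using hNex
  set t1 := S0.sup (fun s => if h : s ∈ S0 then N s h else 0) with ht1
  set δ := min ε 1 with hδdef
  have hδ : (0:ℝ) < δ := lt_min hε one_pos
  have hev : ∀ t ≥ max t0 t1, δ ≤ upperDensity (L (km L (epref E t))) (L z) := by
    intro t ht
    have hσK : ∀ x ∈ epref E t, x ∈ L z := by
      intro x hx
      rcases mem_epref_iff.mp hx with ⟨n, _, rfl⟩
      exact hE.2 ▸ Set.mem_range_self n
    have hex : ∃ j, consIdx L (epref E t) j := ⟨z, hσK⟩
    have hcons := km_cons L (epref E t) hex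
    have hGK : L (km L (epref E t)) ⊆ L z := ht0 t (le_trans (le_max_left _ _) ht)
    have hS0G : ↑S0 ⊆ L (km L (epref E t)) := by
      intro s hs
      have hs' : s ∈ S0 := hs
      have hn : N s hs' ≤ t1 := by
        have := Finset.le_sup (f := fun s => if h : s ∈ S0 then N s h else 0) hs'
        simpa [hs'] using this
      exact hcons s (mem_epref_iff.mpr ⟨N s hs', le_trans hn (le_trans (le_max_right _ _) ht),
        hN s hs'⟩)
    by_cases hiz : L (km L (epref E t)) = L z
    · rw [hiz, upperDensity_self (hinf z)]
      exact min_le_right _ _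
    · exact le_trans (min_le_left _ _) (hS0 _ hS0G (hGK.ssubset_of_ne hiz)).le
  intro h0
  have hb : IsBoundedUnder (· ≤ ·) atTop
      (fun t : ℕ => upperDensity (L (km L (epref E t))) (L z)) :=
    Filter.isBoundedUnder_of ⟨1, fun t => upperDensity_le_one _ _⟩
  have : δ ≤ Filter.liminf (fun t : ℕ => upperDensity (L (km L (epref E t))) (L z)) atTop := by
    refine Filter.le_liminf_of_le hb.isCoboundedUnder_ge ?_
    exact Filter.eventually_atTop.mpr ⟨max t0 t1, hev⟩
  rw [h0] at this
  exact absurd this (not_le.mpr hδ)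


lemma epref_prefix (E : ℕ → ℕ) {t T : ℕ} (h : t ≤ T) : epref E t <+: epref E T := by
  have hT : List.range (T+1) = List.range (t+1) ++ (List.range (T - t)).map ((t+1) + ·) := by
    rw [← List.range_add]; congr 1; omega
  rw [epref, epref, hT, List.map_append]
  exact List.prefix_append _ _

lemma step_ex {L : ℕ → Set ℕ} (hinf : ∀ i, (L i).Infinite) {z : ℕ}
    (hC : ∀ ε : ℝ, 0 < ε → Cprop L z ε) {f : List ℕ → ℕ} (hf : GuaranteesValidity L f)
    (m : ℕ) (p : List ℕ) (hp : p.Nodup) (hpK : ∀ x ∈ p, x ∈ L z) :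
    ∃ q : List ℕ, q.Nodup ∧ (∀ x ∈ q, x ∈ L z) ∧ p <+: q ∧ p.length < q.length ∧
      (∀ n ≤ m, Nat.nth (· ∈ L z) n ∈ q) ∧
      upperDensity (L (f q)) (L z) ≤ 1 / (m + 1) := by
  classical
  set k : ℕ → ℕ := fun n => Nat.nth (· ∈ L z) n with hkdef
  have hkmem : ∀ n, k n ∈ L z := fun n => Nat.nth_mem_of_infinite (hinf z) n
  set l : List ℕ := ((Finset.image k (Finset.range (m+1))) \ p.toFinset).toList with hldef
  set q₁ : List ℕ := p ++ l with hq₁def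
  have hq₁nd : q₁.Nodup := by
    refine List.Nodup.append hp (Finset.nodup_toList _) ?_
    intro x hxp hxl
    have := Finset.mem_sdiff.mp (Finset.mem_toList.mp hxl)
    exact this.2 (List.mem_toFinset.mpr hxp)
  have hq₁K : ∀ x ∈ q₁, x ∈ L z := by
    intro x hx
    rcases List.mem_append.mp hx with h | h
    · exact hpK x h
    · have := (Finset.mem_sdiff.mp (Finset.mem_toList.mp h)).1
      rcases Finset.mem_image.mp this with ⟨n, _, rfl⟩
      exact hkmem n
  have hq₁k : ∀ n ≤ m, k n ∈ q₁ := by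
    intro n hn
    by_cases hmem : k n ∈ p.toFinset
    · exact List.mem_append.mpr (Or.inl (List.mem_toFinset.mp hmem))
    · refine List.mem_append.mpr (Or.inr ?_)
      exact Finset.mem_toList.mpr (Finset.mem_sdiff.mpr
        ⟨Finset.mem_image.mpr ⟨n, Finset.mem_range.mpr (Nat.lt_succ_of_le hn), rfl⟩, hmem⟩)
  have hq₁len1 : 1 ≤ q₁.length := by
    have := hq₁k 0 (Nat.zero_le m)
    exact List.length_pos_iff.mpr (List.ne_nil_of_mem this)
  -- pick the small-density language containing q₁
  have hεm : (0:ℝ) < 1 / (m + 1) := by positivity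
  obtain ⟨i, hi1, hi2, hi3⟩ := hC (1/(m+1)) hεm q₁.toFinset
    (fun x hx => hq₁K x (List.mem_toFinset.mp hx))
  have hq₁Li : ∀ x ∈ q₁, x ∈ L i := fun x hx => hi1 (List.mem_toFinset.mpr hx)
  -- the enumeration of L i extending q₁
  set R : Set ℕ := L i \ ↑q₁.toFinset with hRdef
  have hR : {x | x ∈ R}.Infinite := by
    have : R.Infinite := (hinf i).diff (q₁.toFinset.finite_toSet)
    simpa using this
  set Eb : ℕ → ℕ := fun n =>
    if h : n < q₁.length then q₁.get ⟨n, h⟩ else Nat.nth (· ∈ R) (n - q₁.length) with hEbdef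
  have hEbinj : Function.Injective Eb := by
    intro a b hab
    simp only [hEbdef] at hab
    by_cases ha : a < q₁.length <;> by_cases hb : b < q₁.length
    · rw [dif_pos ha, dif_pos hb] at hab
      have := (List.Nodup.get_inj_iff hq₁nd).mp hab
      exact congrArg Fin.val this
    · rw [dif_pos ha, dif_neg hb] at hab
      exfalso
      have h1 : q₁.get ⟨a, ha⟩ ∈ ↑q₁.toFinset := by
        simp only [Finset.coe_sort_coe, Finset.mem_coe, List.mem_toFinset]
        exact List.get_mem q₁ ⟨a, ha⟩
      have h2 := Nat.nth_mem_of_infinite hR (b - q₁.length)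
      rw [← hab] at h2
      exact h2.2 h1
    · rw [dif_neg ha, dif_pos hb] at hab
      exfalso
      have h1 : q₁.get ⟨b, hb⟩ ∈ ↑q₁.toFinset := by
        simp only [Finset.coe_sort_coe, Finset.mem_coe, List.mem_toFinset]
        exact List.get_mem q₁ ⟨b, hb⟩
      have h2 := Nat.nth_mem_of_infinite hR (a - q₁.length)
      rw [hab] at h2
      exact h2.2 h1
    · rw [dif_neg ha, dif_neg hb] at hab
      have := Nat.nth_injective hR hab
      omega
  have hEbrange : Set.range Eb = L i := by
    apply Set.eq_of_subset_of_subset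
    · rintro x ⟨n, rfl⟩
      simp only [hEbdef]
      by_cases h : n < q₁.length
      · rw [dif_pos h]; exact hq₁Li _ (List.get_mem q₁ ⟨n, h⟩)
      · rw [dif_neg h]; exact (Nat.nth_mem_of_infinite hR _).1
    · intro x hx
      by_cases h : x ∈ q₁
      · rcases List.mem_iff_get.mp h with ⟨⟨n, hn⟩, rfl⟩
        exact ⟨n, by simp only [hEbdef]; rw [dif_pos hn]⟩
      · have hxR : x ∈ {y | y ∈ R} := ⟨hx, fun hc => h (List.mem_toFinset.mp hc)⟩
        rcases Nat.subset_range_nth hxR with ⟨j, hj⟩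
        refine ⟨q₁.length + j, ?_⟩
        simp only [hEbdef]
        rw [dif_neg (by omega)]
        simpa using hj
  obtain ⟨t0, ht0⟩ := hf i Eb ⟨hEbinj, hEbrange⟩
  set T : ℕ := max t0 q₁.length with hTdef
  refine ⟨epref Eb T, ?_, ?_, ?_, ?_, ?_, ?_⟩
  · -- nodup
    show ((List.range (T+1)).map Eb).Nodup
    exact List.nodup_range.map hEbinj
  · intro x hx
    rcases mem_epref_iff.mp hx with ⟨n, _, rfl⟩
    exact hi2.subset (hEbrange ▸ Set.mem_range_self n)
  · -- p <+: q
    have h1 : q₁ = epref Eb (q₁.length - 1) := by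
      apply List.ext_getElem
      · rw [epref_length]; omega
      · intro n h1 h2
        simp only [epref, List.getElem_map, List.getElem_range, hEbdef]
        rw [dif_pos h1]
        simp [List.get_eq_getElem]
    have h2 : q₁ <+: epref Eb T := by
      rw [h1]; exact epref_prefix Eb (by omega)
    exact (List.prefix_append p l).trans h2
  · -- length
    rw [epref_length]
    have hple : p.length ≤ q₁.length := by rw [hq₁def]; simp
    omega
  · -- k n mem
    intro n hn
    have h1 : q₁ = epref Eb (q₁.length - 1) := by
      apply List.ext_getElem
      · rw [epref_length]; omega
      · intro n h1 h2
        simp only [epref, List.getElem_map, List.getElem_range, hEbdef]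
        rw [dif_pos h1]
        simp [List.get_eq_getElem]
    have h2 : q₁ <+: epref Eb T := by
      rw [h1]; exact epref_prefix Eb (by omega)
    exact h2.mem (hq₁k n hn)
  · -- density
    have hsub : L (f (epref Eb T)) ⊆ L i := ht0 T (le_max_left _ _)
    exact le_trans (upperDensity_mono (L z) hsub) hi3

lemma adversary {L : ℕ → Set ℕ} (hinf : ∀ i, (L i).Infinite) {z : ℕ}
    (hC : ∀ ε : ℝ, 0 < ε → Cprop L z ε) (f : List ℕ → ℕ) (hf : GuaranteesValidity L f) :
    ∃ E : ℕ → ℕ, IsEnum E (L z) ∧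
      Filter.liminf (fun t : ℕ => upperDensity (L (f (epref E t))) (L z)) Filter.atTop = 0 := by
  classical
  set k : ℕ → ℕ := fun n => Nat.nth (· ∈ L z) n with hkdef
  set Good : ℕ → List ℕ → List ℕ → Prop := fun m p q =>
    q.Nodup ∧ (∀ x ∈ q, x ∈ L z) ∧ p <+: q ∧ p.length < q.length ∧
      (∀ n ≤ m, k n ∈ q) ∧ upperDensity (L (f q)) (L z) ≤ 1/(m+1) with hGdef
  have key : ∀ m p, p.Nodup → (∀ x ∈ p, x ∈ L z) → ∃ q, Good m p q :=
    fun m p h1 h2 => step_ex hinf hC hf m p h1 h2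
  set step : ℕ → List ℕ → List ℕ := fun m p =>
    if h : p.Nodup ∧ ∀ x ∈ p, x ∈ L z then (key m p h.1 h.2).choose else [] with hsdef
  have hstep : ∀ m p (h1 : p.Nodup) (h2 : ∀ x ∈ p, x ∈ L z), Good m p (step m p) := by
    intro m p h1 h2
    have h : p.Nodup ∧ ∀ x ∈ p, x ∈ L z := ⟨h1, h2⟩
    simp only [hsdef, dif_pos h]
    exact (key m p h.1 h.2).choose_spec
  set P : ℕ → List ℕ := fun m => Nat.rec (step 0 []) (fun m ih => step (m+1) ih) m with hPdef
  have hP0 : P 0 = step 0 [] := rfl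
  have hPs : ∀ m, P (m+1) = step (m+1) (P m) := fun m => rfl
  have hGood : ∀ m, (P m).Nodup ∧ (∀ x ∈ P m, x ∈ L z) ∧ (∀ n ≤ m, k n ∈ P m) ∧
      upperDensity (L (f (P m))) (L z) ≤ 1/(m+1) ∧ m < (P m).length := by
    intro m
    induction m with
    | zero =>
      have h := hstep 0 [] List.nodup_nil (by simp)
      rw [← hP0] at h
      exact ⟨h.1, h.2.1, h.2.2.2.2.1, h.2.2.2.2.2,
        lt_of_le_of_lt (by simp) h.2.2.2.1⟩
    | succ m ih =>
      have h := hstep (m+1) (P m) ih.1 ih.2.1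
      rw [← hPs m] at h
      refine ⟨h.1, h.2.1, h.2.2.2.2.1, h.2.2.2.2.2, ?_⟩
      have h2 := h.2.2.2.1
      have h3 := ih.2.2.2.2
      omega
  have hlen : ∀ m, m < (P m).length := fun m => (hGood m).2.2.2.2
  have hchain : ∀ m, P m <+: P (m+1) := by
    intro m
    have h := hstep (m+1) (P m) (hGood m).1 (hGood m).2.1
    rw [← hPs m] at h
    exact h.2.2.1
  have hmono : ∀ {a b : ℕ}, a ≤ b → P a <+: P b := by
    intro a b hab
    induction b, hab using Nat.le_induction with
    | base => exact List.prefix_refl _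
    | succ n hn ih => exact ih.trans (hchain n)
  set E : ℕ → ℕ := fun n => (P n).getD n 0 with hEdef
  have hEP : ∀ m n (hn : n < (P m).length), E n = (P m)[n] := by
    intro m n hn
    rcases le_total n m with h | h
    · have hp := hmono h
      have h1 : n < (P n).length := hlen n
      show (P n).getD n 0 = (P m)[n]
      rw [List.getD_eq_getElem _ _ h1]
      exact hp.getElem h1
    · have hp := hmono h
      have h1 : n < (P n).length := hlen n
      show (P n).getD n 0 = (P m)[n]
      rw [List.getD_eq_getElem _ _ h1]
      exact (hp.getElem hn).symm
  have hepref : ∀ m, epref E ((P m).length - 1) = P m := by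
    intro m
    have hl := hlen m
    apply List.ext_getElem
    · rw [epref_length]; omega
    · intro n h1 h2
      simp only [epref, List.getElem_map, List.getElem_range]
      exact hEP m n h2
  refine ⟨E, ⟨?_, ?_⟩, ?_⟩
  · -- injective
    intro a b hab
    by_contra hne
    set c := max a b with hc
    have ha : a < (P c).length := lt_of_le_of_lt (le_max_left a b) (hlen c)
    have hb : b < (P c).length := lt_of_le_of_lt (le_max_right a b) (hlen c)
    rw [hEP c a ha, hEP c b hb] at hab
    have := (List.Nodup.get_inj_iff (hGood c).1 (i := ⟨a, ha⟩) (j := ⟨b, hb⟩)).mp (by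
      simpa [List.get_eq_getElem] using hab)
    exact hne (congrArg Fin.val this)
  · -- range = L z
    apply Set.eq_of_subset_of_subset
    · rintro x ⟨n, rfl⟩
      have h1 : n < (P n).length := hlen n
      have : E n = (P n)[n] := hEP n n h1
      rw [this]
      exact (hGood n).2.1 _ (List.getElem_mem h1)
    · intro w hw
      obtain ⟨n, hn⟩ := Nat.subset_range_nth hw
      have hmem : k n ∈ P n := (hGood n).2.2.1 n le_rfl
      obtain ⟨j, hj, hjw⟩ := List.getElem_of_mem hmem
      exact ⟨j, by rw [hEP n j hj, hjw]; exact hn⟩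
  · -- liminf = 0
    set u : ℕ → ℝ := fun t => upperDensity (L (f (epref E t))) (L z) with hudef
    have hub : IsBoundedUnder (· ≤ ·) atTop u :=
      Filter.isBoundedUnder_of ⟨1, fun t => upperDensity_le_one _ _⟩
    have hlb : IsBoundedUnder (· ≥ ·) atTop u :=
      Filter.isBoundedUnder_of ⟨0, fun t => upperDensity_nonneg _ _⟩
    have hlow : 0 ≤ liminf u atTop :=
      Filter.le_liminf_of_le hub.isCoboundedUnder_ge
        (Filter.Eventually.of_forall fun t => upperDensity_nonneg _ _)
    have hhigh : ∀ δ : ℝ, 0 < δ → liminf u atTop ≤ δ := by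
      intro δ hδ
      refine Filter.liminf_le_of_frequently_le ?_ hlb
      rw [Filter.frequently_atTop]
      intro t1
      obtain ⟨m0, hm0⟩ := exists_nat_one_div_lt hδ
      set m := max m0 t1 with hm
      refine ⟨(P m).length - 1, ?_, ?_⟩
      · have := hlen m
        omega
      · show upperDensity (L (f (epref E ((P m).length - 1)))) (L z) ≤ δ
        rw [hepref m]
        refine le_trans (hGood m).2.2.2.1 ?_
        refine le_trans ?_ hm0.le
        have h1 : (m0:ℝ) + 1 ≤ (m:ℝ) + 1 := by
          have : (m0:ℝ) ≤ m := by exact_mod_cast le_max_left m0 t1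
          linarith
        exact one_div_le_one_div_of_le (by positivity) h1
  -- combine
    have : liminf u atTop ≤ 0 := by
      by_contra hpos
      push_neg at hpos
      exact absurd (hhigh (liminf u atTop / 2) (by linarith)) (by linarith)
    linarith

/-- An instance has vanishing breadth (every valid index-based algorithm has, on
some enumeration of `K = L z`, `liminf_t μ_up(L (i_t), K) = 0`) if and only if for
every `ε > 0` there is an infinite perfect tower of languages from the collection
with terminal language `K` all of whose languages have upper density at most `ε`
in `K`. -/
theorem stmt7 (L : ℕ → Set ℕ) (hinf : ∀ i, (L i).Infinite) (z : ℕ) :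
    (∀ f : List ℕ → ℕ, GuaranteesValidity L f →
        ∃ E : ℕ → ℕ, IsEnum E (L z) ∧
          Filter.liminf (fun t : ℕ => upperDensity (L (f (epref E t))) (L z))
            Filter.atTop = 0)
      ↔
    (∀ ε : ℝ, 0 < ε →
        ∃ Λ : ℕ → Set ℕ, (∀ j, ∃ i, Λ j = L i) ∧ IsPerfectTower Λ (L z) ∧
          ∀ j, upperDensity (Λ j) (L z) ≤ ε) := by
  constructor
  · intro hL ε hε
    by_contra hno
    have hnC : ¬ Cprop L z ε := by
      intro hC
      obtain ⟨Λ, h1, h2, h3⟩ := C_to_tower hinf hC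
      exact hno ⟨Λ, h1, h2, h3⟩
    obtain ⟨E, hE, h0⟩ := hL (km L) (km_valid L)
    exact km_fools hinf z hε hnC E hE h0
  · intro hR f hf
    have hC : ∀ ε : ℝ, 0 < ε → Cprop L z ε := by
      intro ε hε
      obtain ⟨Λ, h1, h2, h3⟩ := hR ε hε
      exact tower_to_C Λ h1 h2 h3
    exact adversary hinf hC f hf
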